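/- Let T be the theory of the direct sum of countably many copies of the Prüfer p-group Z(p^∞). Every model of T is isomorphic to a direct sum of copies of Z(p^∞) and copies of ℚ, i.e., of the form ⊕_{i∈I} Z(p^∞) ⊕ ⊕_{j∈J} ℚ for some index sets I (infinite) and J. -/

import Mathlib

open FirstOrder

/-- The first-order language of (additive) groups: a constant `0`, a unary function `-`,
and a binary function `+`. -/
def abLang : FirstOrder.Language where
  Functions := fun n =>
    match n with
    | 0 => Unit
    | 1 => Unit
    | 2 => Unit
    | _ + 3 => Empty
  Relations := fun _ => Empty

/-- Every additive group is an `abLang`-structure in the natural way. -/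
instance abLangStructure (G : Type) [AddGroup G] : abLang.Structure G where
  funMap {n} f x :=
    match n, f, x with
    | 0, _, _ => 0
    | 1, _, x => -(x 0)
    | 2, _, x => x 0 + x 1
  RelMap {n} r _ := r.elim

/-- The Prüfer `p`-group `Z(p^∞)`: the `p`-primary component of `ℚ/ℤ`. -/
abbrev PruferGroup (p : ℕ) [Fact p.Prime] : Type :=
  ↥(AddCommGroup.primaryComponent (AddCircle (1 : ℚ)) p)

/-! ### Auxiliary material -/

set_option linter.unusedSectionVars false
set_option linter.unusedVariables false
set_option maxHeartbeats 1000000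

section Divisibility

/-- nat-surjectivity gives `DivisibleBy A ℤ`. -/
noncomputable def divisibleOfNatSurj (A : Type*) [AddCommGroup A]
    (h : ∀ n : ℕ, n ≠ 0 → ∀ x : A, ∃ y, n • y = x) : DivisibleBy A ℤ := by
  haveI : DivisibleBy A ℕ :=
    { div := fun x n => if hn : n = 0 then 0 else (h n hn x).choose
      div_zero := fun x => by simp
      div_cancel := fun {n} x hn => by
        simpa [hn] using (h n hn x).choose_spec }
  exact AddGroup.divisibleByIntOfDivisibleByNat A

lemma divisible_nsmul_surj (A : Type*) [AddCommGroup A] [DivisibleBy A ℤ] (n : ℕ) (hn : n ≠ 0)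
    (x : A) : ∃ y, n • y = x := by
  refine ⟨DivisibleBy.div x (n : ℤ), ?_⟩
  have := DivisibleBy.div_cancel x (n := (n : ℤ)) (by exact_mod_cast hn)
  rw [← natCast_zsmul]
  exact this

variable {H : Type*} [AddCommGroup H]

lemma coprime_smul_surj {u N : ℕ} (hc : u.Coprime N) (x : H) (hx : N • x = 0) :
    ∃ v : ℕ, u • (v • x) = x := by
  rcases Nat.eq_zero_or_pos N with rfl | hN
  · have hu : u = 1 := by simpa [Nat.coprime_zero_right] using hc
    exact ⟨1, by simp [hu]⟩
  · haveI : NeZero N := ⟨hN.ne'⟩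
    set w := ((ZMod.unitOfCoprime u hc)⁻¹ : (ZMod N)ˣ)
    refine ⟨(w : ZMod N).val, ?_⟩
    have h1 : ((u * (w : ZMod N).val : ℕ) : ZMod N) = 1 := by
      push_cast
      rw [ZMod.natCast_rightInverse (w : ZMod N)]
      rw [← ZMod.coe_unitOfCoprime u hc]
      exact_mod_cast (ZMod.unitOfCoprime u hc).mul_inv
    have h2 : (u * (w : ZMod N).val) ≡ 1 [MOD N] := by
      rwa [← Nat.cast_one, ZMod.natCast_eq_natCast_iff] at h1
    obtain ⟨c, hc'⟩ := h2.dvd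
    have : ((u * (w : ZMod N).val : ℕ) : ℤ) • x = x := by
      have h3 : ((u * (w : ZMod N).val : ℕ) : ℤ) = 1 - N * c := by omega
      rw [h3, sub_zsmul, one_zsmul, mul_comm, mul_zsmul]
      have h0 : (N : ℤ) • x = 0 := by rw [natCast_zsmul]; exact hx
      simp [h0]
    rw [natCast_zsmul] at this
    rw [smul_smul]
    exact this

variable {p : ℕ} [Fact p.Prime]

lemma mem_primary_iff {x : H} :
    x ∈ AddCommGroup.primaryComponent H p ↔ ∃ n : ℕ, p ^ n • x = 0 := by
  constructor
  · rintro ⟨n, hn⟩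
    exact ⟨n, hn⟩
  · rintro ⟨n, hn⟩
    have hd := addOrderOf_dvd_of_nsmul_eq_zero hn
    obtain ⟨m, -, hm⟩ := (Nat.dvd_prime_pow (Fact.out : p.Prime)).mp hd
    exact ⟨m, by rw [← hm]; exact addOrderOf_nsmul_eq_zero x⟩

lemma primary_pow_smul_surj (hdiv : ∀ x : H, ∃ y : H, p • y = x) (k : ℕ)
    (x : AddCommGroup.primaryComponent H p) :
    ∃ y : AddCommGroup.primaryComponent H p, p ^ k • y = x := by
  induction k with
  | zero => exact ⟨x, by simp⟩
  | succ n ih =>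
      obtain ⟨y, hy⟩ := ih
      obtain ⟨z, hz⟩ := hdiv (y : H)
      obtain ⟨m, hm⟩ := mem_primary_iff.mp y.2
      have hzmem : z ∈ AddCommGroup.primaryComponent H p := by
        rw [mem_primary_iff]
        refine ⟨m + 1, ?_⟩
        rw [pow_succ', mul_nsmul, hz]
        exact hm
      refine ⟨⟨z, hzmem⟩, ?_⟩
      apply Subtype.ext
      push_cast
      rw [pow_succ, mul_comm, mul_nsmul, ← hy]
      push_cast
      rw [hz]

/-- The `p`-primary component of a `p`-divisible group is divisible. -/
noncomputable def primaryDivisible (hdiv : ∀ x : H, ∃ y : H, p • y = x) :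
    DivisibleBy (AddCommGroup.primaryComponent H p) ℤ := by
  apply divisibleOfNatSurj
  intro n hn x
  have hp : p.Prime := Fact.out
  set k := n.factorization p with hk
  set u := n / p ^ k with hu
  have hfac : p ^ k * u = n := Nat.ordProj_mul_ordCompl_eq_self n p
  have hcop : u.Coprime p := (Nat.coprime_ordCompl hp hn).symm
  obtain ⟨y, hy⟩ := primary_pow_smul_surj hdiv k x
  obtain ⟨m, hm⟩ := mem_primary_iff.mp y.2
  obtain ⟨v, hv⟩ := coprime_smul_surj (hcop.pow_right m) (y : H) hm
  refine ⟨v • y, Subtype.ext ?_⟩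
  push_cast
  calc n • (v • (y : H)) = p ^ k • (u • (v • (y : H))) := by
        rw [← hfac, ← smul_smul]
    _ = p ^ k • (y : H) := by rw [hv]
    _ = x := by
        have := congrArg Subtype.val hy
        push_cast at this
        exact this

noncomputable def finsuppDivisible {ι M : Type*} [AddCommGroup M] [DivisibleBy M ℤ] :
    DivisibleBy (ι →₀ M) ℤ := by
  classical
  exact
  { div := fun x n => x.mapRange (fun v => if v = 0 then 0 else DivisibleBy.div v n) (by simp)
    div_zero := fun x => by ext i; simp [DivisibleBy.div_zero]
    div_cancel := fun {n} x hn => by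
      ext i
      rw [Finsupp.smul_apply, Finsupp.mapRange_apply]
      by_cases h : x i = 0
      · simp [h]
      · simp only [h, if_false]
        exact DivisibleBy.div_cancel _ hn }

open CategoryTheory in
/-- A divisible subgroup admits a retraction. -/
noncomputable def divisibleRetraction {H : Type} [AddCommGroup H] (A : AddSubgroup H)
    [DivisibleBy A ℤ] : { r : H →+ A // ∀ a : A, r a = a } := by
  let Aobj : AddCommGrpCat := AddCommGrpCat.of A
  let Hobj : AddCommGrpCat := AddCommGrpCat.of H
  let ι : Aobj ⟶ Hobj := AddCommGrpCat.ofHom A.subtype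
  haveI : Mono ι := (AddCommGrpCat.mono_iff_injective ι).mpr (by exact Subtype.val_injective)
  haveI : Injective Aobj := AddCommGrpCat.injective_of_divisible A
  let r : Hobj ⟶ Aobj := Injective.factorThru (𝟙 Aobj) ι
  have hr : ι ≫ r = 𝟙 Aobj := Injective.comp_factorThru (𝟙 Aobj) ι
  refine ⟨r.hom, fun a => ?_⟩
  have := congrArg (fun f => (f : Aobj ⟶ Aobj) a) hr
  simp at this
  exact this

end Divisibility

section RatModule

variable {K : Type} [AddCommGroup K] [NoZeroSMulDivisors ℤ K] [DivisibleBy K ℤ]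

private lemma zcancel {N : ℤ} (hN : N ≠ 0) {a b : K} (h : N • a = N • b) : a = b :=
  smul_right_injective K hN h

noncomputable def qsmul (q : ℚ) (x : K) : K := DivisibleBy.div (q.num • x) (q.den : ℤ)

lemma den_qsmul (q : ℚ) (x : K) : (q.den : ℤ) • qsmul q x = q.num • x :=
  DivisibleBy.div_cancel _ (by exact_mod_cast q.den_nz)

lemma qsmul_eq_of {q : ℚ} {x y : K} (h : (q.den : ℤ) • y = q.num • x) : qsmul q x = y :=
  zcancel (by exact_mod_cast q.den_nz) ((den_qsmul q x).trans h.symm)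

lemma qsmul_intCast (m : ℤ) (x : K) : qsmul (m : ℚ) x = m • x :=
  qsmul_eq_of (by simp)

private lemma num_eq (q : ℚ) : (q.num : ℚ) = q * q.den :=
  (div_eq_iff (by exact_mod_cast q.den_nz)).mp (Rat.num_div_den q)

private lemma add_aux (q r : ℚ) :
    ((q.den : ℤ) * r.den) * (q + r).num = (r.den * q.num + q.den * r.num) * (q + r).den := by
  apply Int.cast_injective (α := ℚ)
  push_cast
  rw [num_eq, num_eq, num_eq]
  ring

private lemma mul_aux (q r : ℚ) :
    ((q.den : ℤ) * r.den) * (q * r).num = (q.num * r.num) * (q * r).den := by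
  apply Int.cast_injective (α := ℚ)
  push_cast
  rw [num_eq, num_eq, num_eq]
  ring

private lemma exists_c {q r s : ℚ} {A : ℤ}
    (h : ((q.den : ℤ) * r.den) * s.num = A * s.den) :
    ∃ c : ℤ, ((q.den : ℤ) * r.den) = s.den * c ∧ c * s.num = A := by
  have hdvd : (s.den : ℤ) ∣ (q.den : ℤ) * r.den := by
    have h1 : (s.den : ℤ) ∣ ((q.den : ℤ) * r.den) * s.num := Dvd.intro A (by linarith [h])
    have hcop : IsCoprime (s.den : ℤ) s.num := by
      rw [Int.isCoprime_iff_gcd_eq_one, Int.gcd, Int.natAbs_natCast]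
      exact Nat.Coprime.symm s.reduced
    exact hcop.dvd_of_dvd_mul_right h1
  obtain ⟨c, hc⟩ := hdvd
  refine ⟨c, hc, ?_⟩
  have hden : (s.den : ℤ) ≠ 0 := by exact_mod_cast s.den_nz
  have h2 := h
  rw [hc] at h2
  have h3 : (s.den : ℤ) * (c * s.num) = (s.den : ℤ) * A := by ring_nf; ring_nf at h2; linarith
  exact mul_left_cancel₀ hden h3

noncomputable def ratModule : Module ℚ K where
  smul := qsmul
  one_smul x := by
    show qsmul 1 x = x
    have := qsmul_intCast 1 x
    simpa using this
  smul_zero q := by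
    show qsmul q 0 = 0
    exact qsmul_eq_of (by simp)
  smul_add q x y := by
    show qsmul q (x + y) = qsmul q x + qsmul q y
    refine (qsmul_eq_of ?_)
    rw [smul_add, smul_add, den_qsmul, den_qsmul]
  add_smul q r x := by
    show qsmul (q + r) x = qsmul q x + qsmul r x
    obtain ⟨c, hc, hcn⟩ := exists_c (add_aux q r)
    apply zcancel (N := (q.den : ℤ) * r.den) (by positivity)
    have hL : ((q.den : ℤ) * r.den) • qsmul (q + r) x
        = ((r.den : ℤ) * q.num + (q.den : ℤ) * r.num) • x := by
      rw [hc, mul_comm, mul_smul, den_qsmul, ← mul_smul, hcn]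
    have hR1 : ((q.den : ℤ) * r.den) • qsmul q x = ((r.den : ℤ) * q.num) • x := by
      rw [mul_comm, mul_smul, den_qsmul, ← mul_smul]
    have hR2 : ((q.den : ℤ) * r.den) • qsmul r x = ((q.den : ℤ) * r.num) • x := by
      rw [mul_smul, den_qsmul, ← mul_smul]
    rw [smul_add, hL, hR1, hR2, ← add_smul]
  zero_smul x := by
    show qsmul 0 x = 0
    exact qsmul_eq_of (by simp)
  mul_smul q r x := by
    show qsmul (q * r) x = qsmul q (qsmul r x)
    obtain ⟨c, hc, hcn⟩ := exists_c (mul_aux q r)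
    apply zcancel (N := (q.den : ℤ) * r.den) (by positivity)
    have hL : ((q.den : ℤ) * r.den) • qsmul (q * r) x = (q.num * r.num) • x := by
      rw [hc, mul_comm, mul_smul, den_qsmul, ← mul_smul, hcn]
    have hR : ((q.den : ℤ) * r.den) • qsmul q (qsmul r x) = (q.num * r.num) • x := by
      rw [mul_comm, mul_smul, den_qsmul, smul_comm, den_qsmul, smul_smul]
    rw [hL, hR]

/-- A torsion-free divisible abelian group is isomorphic to a direct sum of copies of `ℚ`. -/
lemma exists_ratFinsupp (K : Type) [AddCommGroup K] (tf : NoZeroSMulDivisors ℤ K)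
    (dv : DivisibleBy K ℤ) : ∃ J : Type, Nonempty (K ≃+ (J →₀ ℚ)) := by
  letI : Module ℚ K := ratModule
  let b := Module.Basis.ofVectorSpace ℚ K
  exact ⟨_, ⟨b.repr.toAddEquiv⟩⟩

end RatModule

section Prufer
variable (p : ℕ) [Fact p.Prime]

lemma addCircle_p_div (x : AddCircle (1 : ℚ)) : ∃ y, p • y = x := by
  haveI : DivisibleBy ℚ ℕ := AddGroup.divisibleByNatOfDivisibleByInt ℚ
  haveI : DivisibleBy (AddCircle (1 : ℚ)) ℕ := QuotientAddGroup.divisibleBy _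
  exact ⟨DivisibleBy.div x p, DivisibleBy.div_cancel x (Fact.out : p.Prime).ne_zero⟩

noncomputable def u₁ : AddCircle (1 : ℚ) := (((p : ℚ)⁻¹ : ℚ) : AddCircle (1 : ℚ))

lemma p_smul_u₁ : p • u₁ p = 0 := by
  have hp : (p : ℚ) ≠ 0 := by exact_mod_cast (Fact.out : p.Prime).ne_zero
  have : p • u₁ p = (((p : ℚ) * (p : ℚ)⁻¹ : ℚ) : AddCircle (1 : ℚ)) := by
    rw [u₁, ← QuotientAddGroup.mk_nsmul]
    norm_cast
  rw [this, mul_inv_cancel₀ hp]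
  exact AddCircle.coe_period 1

lemma u₁_ne_zero : u₁ p ≠ 0 := by
  intro h
  rw [u₁, AddCircle.coe_eq_zero_iff] at h
  obtain ⟨n, hn⟩ := h
  have h1 : (n : ℚ) = (p : ℚ)⁻¹ := by simpa using hn
  have hp : (p : ℚ) ≠ 0 := by exact_mod_cast (Fact.out : p.Prime).ne_zero
  have h2 : (n : ℚ) * p = 1 := by rw [h1]; field_simp
  have h3 : (n * p : ℤ) = 1 := by exact_mod_cast h2
  have h4 : (p : ℤ) ∣ 1 := ⟨n, by linarith⟩
  have h5 := Int.le_of_dvd one_pos h4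
  have := (Fact.out : p.Prime).two_le
  omega

lemma socle_gen (x : AddCircle (1 : ℚ)) (hx : p • x = 0) : ∃ k : ℤ, x = k • u₁ p := by
  obtain ⟨r, rfl⟩ := QuotientAddGroup.mk_surjective x
  rw [← QuotientAddGroup.mk_nsmul, QuotientAddGroup.eq_zero_iff] at hx
  obtain ⟨m, hm⟩ := AddSubgroup.mem_zmultiples_iff.mp hx
  have hp : (p : ℚ) ≠ 0 := by exact_mod_cast (Fact.out : p.Prime).ne_zero
  have hr : r = m • ((p : ℚ)⁻¹ : ℚ) := by
    have : (m : ℚ) = p • r := by simpa using hm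
    rw [nsmul_eq_mul] at this
    rw [zsmul_eq_mul]
    field_simp
    linarith [this]
  refine ⟨m, ?_⟩
  rw [hr, u₁, ← QuotientAddGroup.mk_zsmul]

noncomputable def g₁ : PruferGroup p :=
  ⟨u₁ p, mem_primary_iff.mpr ⟨1, by rw [pow_one]; exact p_smul_u₁ p⟩⟩

lemma p_smul_g₁ : p • g₁ p = 0 := Subtype.ext (by push_cast; exact p_smul_u₁ p)

lemma g₁_ne_zero : g₁ p ≠ 0 := fun h => u₁_ne_zero p (congrArg Subtype.val h)

noncomputable def homZP : ZMod p →+ PruferGroup p :=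
  ZMod.lift p ⟨zmultiplesHom _ (g₁ p), by
    show (p : ℤ) • g₁ p = 0
    rw [natCast_zsmul]
    exact p_smul_g₁ p⟩

lemma homZP_intCast (k : ℤ) : homZP p (k : ZMod p) = k • g₁ p := ZMod.lift_coe _ _ _

lemma homZP_injective : Function.Injective (homZP p) := by
  haveI : NeZero p := ⟨(Fact.out : p.Prime).ne_zero⟩
  rw [injective_iff_map_eq_zero]
  intro k hk
  have hkv : ((k.val : ℤ) : ZMod p) = k := by
    push_cast
    exact ZMod.natCast_rightInverse k
  rw [← hkv, homZP_intCast, natCast_zsmul] at hk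
  have hord : addOrderOf (g₁ p) = p := by
    have hd := addOrderOf_dvd_of_nsmul_eq_zero (p_smul_g₁ p)
    rcases ((Fact.out : p.Prime).eq_one_or_self_of_dvd _ hd).symm.symm with h | h
    · exact absurd (AddMonoid.addOrderOf_eq_one_iff.mp h) (g₁_ne_zero p)
    · exact h
  have hdvd := hord ▸ addOrderOf_dvd_of_nsmul_eq_zero hk
  have hlt : k.val < p := ZMod.val_lt k
  have hv0 : k.val = 0 := by
    rcases Nat.eq_zero_or_pos k.val with h | h
    · exact h
    · exact absurd (Nat.le_of_dvd h hdvd) (by omega)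
  rw [← hkv, hv0]
  simp

lemma homZP_socle (y : PruferGroup p) (hy : p • y = 0) : ∃ k : ZMod p, homZP p k = y := by
  have hy' : p • (y : AddCircle (1 : ℚ)) = 0 := by
    have := congrArg Subtype.val hy
    push_cast at this
    exact this
  obtain ⟨k, hk⟩ := socle_gen p (y : AddCircle (1 : ℚ)) hy'
  refine ⟨(k : ZMod p), ?_⟩
  rw [homZP_intCast]
  apply Subtype.ext
  push_cast
  exact hk.symm

end Prufer

namespace FO
open Language

variable {k : ℕ}

def zeroT : abLang.Term (Empty ⊕ Fin k) := Term.func (l := 0) () ![]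
def addT (t s : abLang.Term (Empty ⊕ Fin k)) : abLang.Term (Empty ⊕ Fin k) :=
  Term.func (l := 2) () ![t, s]
def smulT (m : ℕ) (t : abLang.Term (Empty ⊕ Fin k)) : abLang.Term (Empty ⊕ Fin k) :=
  Nat.rec zeroT (fun _ s => addT s t) m
def varT (i : Fin k) : abLang.Term (Empty ⊕ Fin k) := Term.var (Sum.inr i)

variable {G : Type} [AddGroup G]

@[simp] lemma realize_zeroT (v : Empty ⊕ Fin k → G) : (zeroT (k := k)).realize v = 0 := rfl

@[simp] lemma realize_addT (t s : abLang.Term (Empty ⊕ Fin k)) (v : Empty ⊕ Fin k → G) :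
    (addT t s).realize v = t.realize v + s.realize v := rfl

@[simp] lemma realize_smulT (m : ℕ) (t : abLang.Term (Empty ⊕ Fin k)) (v : Empty ⊕ Fin k → G) :
    (smulT m t).realize v = m • t.realize v := by
  induction m with
  | zero => simp [smulT]
  | succ n ih =>
      show (addT (smulT n t) t).realize v = _
      rw [realize_addT, ih, succ_nsmul]

@[simp] lemma realize_varT (i : Fin k) (v : Empty ⊕ Fin k → G) :
    (varT i).realize v = v (Sum.inr i) := rfl

/-- divisibility sentence -/
def σdiv (n : ℕ) : abLang.Sentence :=
  BoundedFormula.all (BoundedFormula.ex ((smulT n (varT 1)).bdEqual (varT 0)))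

lemma realize_σdiv (n : ℕ) : G ⊨ σdiv n ↔ ∀ x : G, ∃ y : G, n • y = x := by
  simp only [σdiv, Sentence.Realize, Formula.Realize, BoundedFormula.realize_all,
    BoundedFormula.realize_ex, BoundedFormula.realize_bdEqual, Term.realize,
    realize_smulT, realize_varT]
  constructor
  · intro h x
    obtain ⟨y, hy⟩ := h x
    exact ⟨y, by simpa [Fin.snoc] using hy⟩
  · intro h x
    obtain ⟨y, hy⟩ := h x
    exact ⟨y, by simpa [Fin.snoc] using hy⟩

/-- torsion-freeness at q -/
def σtf (q : ℕ) : abLang.Sentence :=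
  BoundedFormula.all (((smulT q (varT 0)).bdEqual zeroT).imp ((varT 0).bdEqual zeroT))

lemma realize_σtf (q : ℕ) : G ⊨ σtf q ↔ ∀ x : G, q • x = 0 → x = 0 := by
  simp only [σtf, Sentence.Realize, Formula.Realize, BoundedFormula.realize_all,
    BoundedFormula.realize_imp, BoundedFormula.realize_bdEqual, realize_smulT, realize_varT,
    realize_zeroT]
  constructor
  · intro h x hx
    simpa [Fin.snoc] using h x (by simpa [Fin.snoc] using hx)
  · intro h x hx
    simpa [Fin.snoc] using h _ (by simpa [Fin.snoc] using hx)

def andList : List (abLang.BoundedFormula Empty k) → abLang.BoundedFormula Empty k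
  | [] => ⊤
  | φ :: l => φ ⊓ andList l

lemma realize_andList (l : List (abLang.BoundedFormula Empty k)) (v : Empty → G)
    (xs : Fin k → G) : (andList l).Realize v xs ↔ ∀ φ ∈ l, φ.Realize v xs := by
  induction l with
  | nil => simp [andList]
  | cons φ l ih => simp [andList, ih]

/-- there exist `k` distinct `p`-torsion elements -/
def σcard (p k : ℕ) : abLang.Sentence :=
  (andList (((List.finRange k).product (List.finRange k)).filterMap
      (fun ij => if ij.1 ≠ ij.2 then some (BoundedFormula.not ((varT ij.1).bdEqual (varT ij.2)))
        else none)
    ++ (List.finRange k).map (fun i => (smulT p (varT i)).bdEqual zeroT))).exs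

lemma realize_σcard (p k : ℕ) :
    G ⊨ σcard p k ↔ ∃ xs : Fin k → G, (∀ i j : Fin k, i ≠ j → xs i ≠ xs j) ∧
      ∀ i, p • xs i = 0 := by
  simp only [σcard, Sentence.Realize, BoundedFormula.realize_exs]
  refine exists_congr fun xs => ?_
  rw [realize_andList]
  constructor
  · intro h
    constructor
    · intro i j hij hx
      have := h (BoundedFormula.not ((varT i).bdEqual (varT j)))
        (by
          apply List.mem_append_left
          apply List.mem_filterMap.mpr
          exact ⟨(i, j), by simp [List.pair_mem_product], by simp [hij]⟩)
      simp only [BoundedFormula.realize_not, BoundedFormula.realize_bdEqual, realize_varT] at this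
      exact this hx
    · intro i
      have := h ((smulT p (varT i)).bdEqual zeroT)
        (by
          apply List.mem_append_right
          exact List.mem_map.mpr ⟨i, List.mem_finRange i, rfl⟩)
      simpa using this
  · rintro ⟨h1, h2⟩ φ hφ
    rcases List.mem_append.mp hφ with hl | hr
    · obtain ⟨⟨i, j⟩, hmem, hij⟩ := List.mem_filterMap.mp hl
      by_cases hne : i ≠ j
      · rw [if_pos hne, Option.some_inj] at hij
        rw [← hij]
        simp only [BoundedFormula.realize_not, BoundedFormula.realize_bdEqual, realize_varT]
        exact h1 i j hne
      · simp [hne] at hij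
    · obtain ⟨i, -, rfl⟩ := List.mem_map.mp hr
      simpa using h2 i

end FO

/-! ### The main theorem -/

theorem stmt7 (p : ℕ) [Fact p.Prime] (G : Type) [AddCommGroup G]
    (h : G ≅[abLang] (ℕ →₀ PruferGroup p)) :
    ∃ (I J : Type), Infinite I ∧
      Nonempty (G ≃+ ((I →₀ PruferGroup p) × (J →₀ ℚ))) := by
  classical
  have hp : p.Prime := Fact.out
  set D := (ℕ →₀ PruferGroup p) with hD
  haveI pdiv : DivisibleBy (PruferGroup p) ℤ := primaryDivisible (addCircle_p_div p)
  haveI Ddiv : DivisibleBy D ℤ := finsuppDivisible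
  -- facts about D
  have hDdiv : ∀ n : ℕ, n ≠ 0 → ∀ x : D, ∃ y, n • y = x := fun n hn x =>
    divisible_nsmul_surj D n hn x
  have hDtf : ∀ q : ℕ, q.Prime → q ≠ p → ∀ x : D, q • x = 0 → x = 0 := by
    intro q hq hqp x hx
    ext i
    have hxi : q • x i = 0 := by
      calc q • x i = (Finsupp.applyAddHom (M := PruferGroup p) i) (q • x) :=
            (map_nsmul (Finsupp.applyAddHom (M := PruferGroup p) i) q x).symm
        _ = 0 := by rw [hx, map_zero]
    obtain ⟨n, hn⟩ := mem_primary_iff.mp (x i).2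
    have hn' : p ^ n • x i = 0 := Subtype.ext (by push_cast; exact hn)
    have hd1 := addOrderOf_dvd_of_nsmul_eq_zero hxi
    have hd2 := addOrderOf_dvd_of_nsmul_eq_zero hn'
    rcases (hq.eq_one_or_self_of_dvd _ hd1) with h1 | h1
    · simpa using AddMonoid.addOrderOf_eq_one_iff.mp h1
    · exfalso
      have : q ∣ p ^ n := h1 ▸ hd2
      exact hqp ((Nat.prime_dvd_prime_iff_eq hq hp).mp (hq.dvd_of_dvd_pow this))
  have hDcard : ∀ k : ℕ, ∃ xs : Fin k → D, (∀ i j : Fin k, i ≠ j → xs i ≠ xs j) ∧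
      ∀ i, p • xs i = 0 := by
    intro k
    refine ⟨fun i => Finsupp.single (i : ℕ) (g₁ p), ?_, ?_⟩
    · intro i j hij hx
      have := congrArg (fun f => (f : ℕ →₀ PruferGroup p) (i : ℕ)) hx
      simp only [Finsupp.single_eq_same] at this
      rw [Finsupp.single_eq_of_ne' (by simpa using fun hc => hij (Fin.val_injective hc).symm)] at this
      exact g₁_ne_zero p this
    · intro i
      rw [Finsupp.smul_single, p_smul_g₁, Finsupp.single_zero]
  -- transfer to G
  have hGdiv : ∀ n : ℕ, n ≠ 0 → ∀ x : G, ∃ y, n • y = x := fun n hn =>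
    (FO.realize_σdiv n).mp ((h.realize_sentence _).mpr ((FO.realize_σdiv n).mpr (hDdiv n hn)))
  have hGtf : ∀ q : ℕ, q.Prime → q ≠ p → ∀ x : G, q • x = 0 → x = 0 := fun q hq hqp =>
    (FO.realize_σtf q).mp ((h.realize_sentence _).mpr ((FO.realize_σtf q).mpr (hDtf q hq hqp)))
  have hGcard : ∀ k : ℕ, ∃ xs : Fin k → G, (∀ i j : Fin k, i ≠ j → xs i ≠ xs j) ∧
      ∀ i, p • xs i = 0 := fun k =>
    (FO.realize_σcard p k).mp ((h.realize_sentence _).mpr ((FO.realize_σcard p k).mpr (hDcard k)))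
  haveI Gdiv : DivisibleBy G ℤ := divisibleOfNatSurj G hGdiv
  -- every torsion element of G has p-power order
  have hGpow : ∀ n : ℕ, n ≠ 0 → ∀ x : G, n • x = 0 → ∃ m, p ^ m • x = 0 := by
    intro n
    induction n using Nat.strong_induction_on with
    | _ n IH =>
      intro hn x hx
      rcases eq_or_ne n 1 with rfl | h1
      · exact ⟨0, by simpa using hx⟩
      have hq : n.minFac.Prime := Nat.minFac_prime h1
      have hdvd : n.minFac ∣ n := Nat.minFac_dvd n
      have hlt : n / n.minFac < n := Nat.div_lt_self (Nat.pos_of_ne_zero hn) hq.one_lt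
      have hne : n / n.minFac ≠ 0 := by
        intro hc
        have := Nat.div_mul_cancel hdvd
        rw [hc] at this
        simp at this
        exact hn this.symm
      have key : (n / n.minFac) • (n.minFac • x) = 0 := by
        rw [smul_smul, Nat.div_mul_cancel hdvd]
        exact hx
      by_cases hqp : n.minFac = p
      · obtain ⟨m, hm⟩ := IH (n / n.minFac) hlt hne (n.minFac • x) key
        refine ⟨m + 1, ?_⟩
        rw [hqp, smul_smul] at hm
        rw [pow_succ]
        exact hm
      · have : (n / n.minFac) • x = 0 := by
          have hy : n.minFac • ((n / n.minFac) • x) = 0 := by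
            rw [smul_smul, mul_comm, Nat.div_mul_cancel hdvd]
            exact hx
          exact hGtf n.minFac hq hqp _ hy
        exact IH (n / n.minFac) hlt hne x this
  -- the socle V of G
  let V : AddSubgroup G :=
    { carrier := {x : G | p • x = 0}
      zero_mem' := by simp
      add_mem' := fun {a b} ha hb => by
        simp only [Set.mem_setOf_eq] at *
        rw [smul_add, ha, hb, add_zero]
      neg_mem' := fun {a} ha => by
        simp only [Set.mem_setOf_eq] at *
        rw [smul_neg, ha, neg_zero] }
  letI : Module (ZMod p) V := AddCommGroup.zmodModule (n := p) (fun x => Subtype.ext (by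
    push_cast
    exact x.2))
  have hVinf : Infinite V := by
    rw [← not_finite_iff_infinite]
    intro hfin
    obtain ⟨xs, hdist, htor⟩ := hGcard (Nat.card V + 1)
    have hinj : Function.Injective (fun i => (⟨xs i, htor i⟩ : V)) := by
      intro i j hij
      by_contra hne
      exact hdist i j hne (congrArg Subtype.val hij)
    have hcard := Nat.card_le_card_of_injective _ hinj
    rw [Nat.card_eq_fintype_card (α := Fin _), Fintype.card_fin] at hcard
    omega
  let b := Module.Basis.ofVectorSpace (ZMod p) V
  set I := ↥(Module.Basis.ofVectorSpaceIndex (ZMod p) V) with hI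
  -- the two maps
  let χ : (I →₀ ZMod p) →+ G :=
    V.subtype.comp (b.repr.symm.toAddEquiv.toAddMonoidHom)
  have hχinj : Function.Injective χ := by
    intro a b' hab
    have := Subtype.val_injective hab
    exact b.repr.symm.injective (by exact_mod_cast this)
  have hχV : ∀ x : G, p • x = 0 → ∃ z, χ z = x := by
    intro x hx
    refine ⟨b.repr.toAddEquiv (⟨x, hx⟩ : V), ?_⟩
    show V.subtype (b.repr.symm.toAddEquiv.toAddMonoidHom (b.repr.toAddEquiv (⟨x, hx⟩ : V))) = x
    show ((b.repr.toAddEquiv.symm (b.repr.toAddEquiv (⟨x, hx⟩ : V))) : G) = x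
    rw [AddEquiv.symm_apply_apply]
  let ψ : (I →₀ ZMod p) →+ (I →₀ PruferGroup p) :=
    Finsupp.mapRange.addMonoidHom (homZP p)
  have hψinj : Function.Injective ψ := by
    have h' : Function.Injective
        (Finsupp.mapRange (homZP p) (map_zero _) : (I →₀ ZMod p) → (I →₀ PruferGroup p)) :=
      Finsupp.mapRange_injective _ _ (homZP_injective p)
    exact h'
  -- build Φ by injectivity
  obtain ⟨Φ, hΦψ⟩ : ∃ Φ : (I →₀ PruferGroup p) →+ G, ∀ z, Φ (ψ z) = χ z := by
    let Xobj : AddCommGrpCat := AddCommGrpCat.of (I →₀ ZMod p)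
    let Yobj : AddCommGrpCat := AddCommGrpCat.of (I →₀ PruferGroup p)
    let Gobj : AddCommGrpCat := AddCommGrpCat.of G
    let ψ' : Xobj ⟶ Yobj := AddCommGrpCat.ofHom ψ
    let χ' : Xobj ⟶ Gobj := AddCommGrpCat.ofHom χ
    haveI : CategoryTheory.Mono ψ' := (AddCommGrpCat.mono_iff_injective ψ').mpr hψinj
    haveI : CategoryTheory.Injective Gobj := AddCommGrpCat.injective_of_divisible G
    let Φ' : Yobj ⟶ Gobj := CategoryTheory.Injective.factorThru χ' ψ'
    have hfac := CategoryTheory.Injective.comp_factorThru χ' ψ'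
    refine ⟨Φ'.hom, fun z => ?_⟩
    exact congrArg (fun f => (f : Xobj ⟶ Gobj).hom z) hfac
  -- every element of I →₀ P is p-power torsion
  have hpowF : ∀ f : (I →₀ PruferGroup p), ∃ n, p ^ n • f = 0 := by
    intro f
    induction f using Finsupp.induction with
    | zero => exact ⟨0, by simp⟩
    | single_add a y f' ha' hy IH =>
        obtain ⟨n, hn⟩ := IH
        obtain ⟨m, hm⟩ := mem_primary_iff.mp y.2
        have hm' : p ^ m • y = 0 := Subtype.ext (by push_cast; exact hm)
        refine ⟨n + m, ?_⟩
        rw [smul_add]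
        have h1 : p ^ (n + m) • Finsupp.single a y = 0 := by
          rw [Finsupp.smul_single, pow_add, mul_smul, hm', smul_zero, Finsupp.single_zero]
        have h2 : p ^ (n + m) • f' = 0 := by
          rw [pow_add, mul_comm, mul_smul, hn, smul_zero]
        rw [h1, h2, add_zero]
  -- Φ is injective
  have hΦinj : Function.Injective Φ := by
    rw [injective_iff_map_eq_zero]
    intro f hf
    by_contra hfne
    have hex : ∃ n, p ^ n • f = 0 := hpowF f
    let n₀ := Nat.find hex
    have hn₀ : p ^ n₀ • f = 0 := Nat.find_spec hex
    have hn₀ne : n₀ ≠ 0 := by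
      intro hc
      rw [hc] at hn₀
      simpa using hfne (by simpa using hn₀)
    set y := p ^ (n₀ - 1) • f with hy
    have hyne : y ≠ 0 := Nat.find_min hex (Nat.sub_lt (Nat.pos_of_ne_zero hn₀ne) one_pos)
    have hpy : p • y = 0 := by
      rw [hy, smul_smul, ← pow_succ']
      have he : n₀ - 1 + 1 = n₀ := by omega
      rw [he]
      exact hn₀
    -- y is in the image of ψ
    let inv : PruferGroup p → ZMod p := fun w =>
      if hw : ∃ k, homZP p k = w then hw.choose else 0
    have hinv0 : inv 0 = 0 := by
      have h0 : ∃ k, homZP p k = 0 := ⟨0, map_zero _⟩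
      simp only [inv, dif_pos h0]
      exact homZP_injective p (by rw [h0.choose_spec, map_zero])
    have hcoord : ∀ w : PruferGroup p, p • w = 0 → homZP p (inv w) = w := by
      intro w hw
      have hex2 : ∃ k, homZP p k = w := homZP_socle p w hw
      simp only [inv, dif_pos hex2]
      exact hex2.choose_spec
    have hψz : ψ (y.mapRange inv hinv0) = y := by
      ext i
      have hyi : p • y i = 0 := by
        calc p • y i = (Finsupp.applyAddHom (M := PruferGroup p) i) (p • y) :=
              (map_nsmul (Finsupp.applyAddHom (M := PruferGroup p) i) p y).symm
          _ = 0 := by rw [hpy, map_zero]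
      simp only [ψ, Finsupp.mapRange.addMonoidHom_apply, Finsupp.mapRange_mapRange,
        Finsupp.mapRange_apply, Function.comp_apply]
      exact congrArg Subtype.val (hcoord (y i) hyi)
    have hχz : χ (y.mapRange inv hinv0) = 0 := by
      rw [← hΦψ, hψz, hy, map_nsmul, hf, smul_zero]
    have := hχinj (hχz.trans (map_zero χ).symm)
    rw [← hψz, this, map_zero] at hyne
    exact hyne rfl
  -- A = range of Φ
  set A := Φ.range with hA
  let eA : (I →₀ PruferGroup p) ≃+ A :=
    AddEquiv.ofBijective Φ.rangeRestrict
      ⟨fun a b' hab => hΦinj (congrArg Subtype.val hab), Φ.rangeRestrict_surjective⟩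
  haveI Fdiv : DivisibleBy (I →₀ PruferGroup p) ℤ := finsuppDivisible
  haveI Adiv : DivisibleBy A ℤ :=
    Function.Surjective.divisibleBy eA eA.surjective (fun a n => map_zsmul eA n a)
  obtain ⟨r, hr⟩ := divisibleRetraction A
  set K := r.ker with hK
  -- V is contained in A
  have hVA : ∀ x : G, p • x = 0 → x ∈ A := by
    intro x hx
    obtain ⟨z, hz⟩ := hχV x hx
    exact ⟨ψ z, by rw [hΦψ z, hz]⟩
  -- elements of K with p-power torsion vanish
  have hKtor : ∀ x : G, x ∈ K → ∀ m : ℕ, p ^ m • x = 0 → x = 0 := by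
    intro x hx m
    induction m generalizing x with
    | zero => intro h0; simpa using h0
    | succ m IH =>
        intro hsm
        have hpx : p • x ∈ K := K.nsmul_mem hx p
        have : p ^ m • (p • x) = 0 := by
          rw [smul_smul, ← pow_succ]
          exact hsm
        have hpx0 : p • x = 0 := IH _ hpx this
        have hxA : x ∈ A := hVA x hpx0
        have : r x = ⟨x, hxA⟩ := hr ⟨x, hxA⟩
        have hx0 : r x = 0 := hx
        rw [hx0] at this
        exact (congrArg Subtype.val this.symm : x = 0)
  -- K is torsion-free and divisible
  haveI Ktf : NoZeroSMulDivisors ℤ K := by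
    refine ⟨fun {n x} hnx => ?_⟩
    by_cases hn : n = 0
    · exact Or.inl hn
    right
    have hco : (n.natAbs : ℕ) • (x : G) = 0 := by
      have h1 : n • (x : G) = 0 := by
        have := congrArg Subtype.val hnx
        push_cast at this
        exact this
      rcases Int.natAbs_eq n with he | he
      · rw [← natCast_zsmul, ← he]; exact h1
      · rw [← natCast_zsmul, ← neg_neg ((n.natAbs : ℤ)), ← he, neg_zsmul, h1, neg_zero]
    obtain ⟨m, hm⟩ := hGpow n.natAbs (Int.natAbs_ne_zero.mpr hn) (x : G) hco
    exact Subtype.ext (hKtor (x : G) x.2 m hm)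
  haveI Kdiv : DivisibleBy K ℤ := by
    apply divisibleOfNatSurj
    intro n hn x
    obtain ⟨y, hy⟩ := hGdiv n hn (x : G)
    have hkK : y - (r y : G) ∈ K := by
      have : r (y - (r y : G)) = r y - r (r y : G) := map_sub r _ _
      rw [AddMonoidHom.mem_ker, this, hr (r y), sub_self]
    refine ⟨⟨y - (r y : G), hkK⟩, Subtype.ext ?_⟩
    push_cast
    rw [smul_sub, hy]
    have hrx : r (x : G) = 0 := x.2
    have h2 : (n • (r y : G)) = ((r (n • y) : A) : G) := by
      rw [map_nsmul]
      push_cast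
      rfl
    rw [h2, hy, hrx]
    simp
  obtain ⟨J, ⟨eK⟩⟩ := exists_ratFinsupp K Ktf Kdiv
  -- the decomposition G ≃+ A × K
  let ρ : G →+ K :=
    { toFun := fun x => ⟨x - (r x : G), by
        rw [AddMonoidHom.mem_ker, map_sub, hr (r x), sub_self]⟩
      map_zero' := by
        apply Subtype.ext
        simp
      map_add' := fun x y => by
        apply Subtype.ext
        push_cast
        rw [map_add]
        push_cast
        abel }
  let π : G →+ A × K := r.prod ρ
  have hπbij : Function.Bijective π := by
    constructor
    · intro x y hxy
      have h1 : r x = r y := congrArg Prod.fst hxy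
      have h2 : (x - (r x : G)) = (y - (r y : G)) :=
        congrArg Subtype.val (congrArg Prod.snd hxy)
      have := congrArg (fun a : A => (a : G)) h1
      beta_reduce at this
      calc x = (x - (r x : G)) + (r x : G) := by abel
        _ = (y - (r y : G)) + (r y : G) := by rw [h2, this]
        _ = y := by abel
    · rintro ⟨a, k⟩
      refine ⟨(a : G) + (k : G), ?_⟩
      have h2 : r (k : G) = 0 := k.2
      have hfst : r ((a : G) + (k : G)) = a := by
        rw [map_add, hr a, h2, add_zero]
      refine Prod.ext hfst (Subtype.ext ?_)
      show ((a : G) + (k : G)) - (r ((a : G) + (k : G)) : G) = (k : G)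
      rw [hfst]
      abel
  let e : G ≃+ A × K := AddEquiv.ofBijective π hπbij
  -- conclusion
  refine ⟨I, J, ?_, ⟨?_⟩⟩
  · rw [← not_finite_iff_infinite]
    intro hIfin
    haveI : Finite (I →₀ ZMod p) := Finite.of_equiv _ Finsupp.equivFunOnFinite.symm
    haveI : Finite V := Finite.of_equiv _ b.repr.toEquiv.symm
    exact (not_finite_iff_infinite.mpr hVinf) this
  · exact e.trans (AddEquiv.prodCongr eA.symm eK)
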